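/- Let X be an (n,S)-expression and suppose S = S₁ ⊔ S₂ is a partition into two nonempty sets such that for some fixed i, x□ᵢy in X for every x ∈ S₁ and y ∈ S₂. Then X decomposes as X = (X∩S₁) □ᵢ (X∩S₂); that is, X equals the expression obtained by joining its restrictions to S₁ and to S₂ by the operation □ᵢ. -/

import Mathlib

/-- Formal `(n, Fin k)`-expressions: binary trees whose leaves are labeled by
generators and whose internal nodes are labeled by one of the `n` operations.
Expressions are considered up to the strict associativity of each operation,
via the relation `W.equiv` below. -/
inductive W (n k : ℕ) : Type
  | leaf : Fin k → W n k
  | node : Fin n → W n k → W n k → W n k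

namespace W

variable {n k : ℕ}

/-- The list of leaf labels, from left to right. -/
def leaves : W n k → List (Fin k)
  | leaf a => [a]
  | node _ A B => A.leaves ++ B.leaves

/-- `A.Exact T`: the expression `A` uses each element of `T` exactly once and
no other generators. -/
def Exact (A : W n k) (T : Finset (Fin k)) : Prop :=
  A.leaves.Nodup ∧ A.leaves.toFinset = T

/-- `A.inRel a b i` means `a □ᵢ b` in `A`: the lowest common "ancestor" node of the
leaves `a` and `b` carries the operation `i`, with `a` to the left of `b`. -/
def inRel : W n k → Fin k → Fin k → Fin n → Prop
  | leaf _, _, _, _ => False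
  | node j A B, a, b, i => A.inRel a b i ∨ B.inRel a b i ∨ (j = i ∧ a ∈ A.leaves ∧ b ∈ B.leaves)

/-- The order relation of the poset `M̂ₙ`: `A ≤ B` iff whenever `a □ᵢ b` in `A`,
either `a □ⱼ b` in `B` for some `j ≥ i`, or `b □ⱼ a` in `B` for some `j > i`. -/
def le (A B : W n k) : Prop :=
  ∀ a b : Fin k, a ≠ b → ∀ i : Fin n, A.inRel a b i →
    ∃ j : Fin n, (i ≤ j ∧ B.inRel a b j) ∨ (i < j ∧ B.inRel b a j)

/-- One step of the associativity/congruence relation on expressions. -/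
inductive Step : W n k → W n k → Prop
  | assoc (i : Fin n) (A B C : W n k) :
      Step (node i (node i A B) C) (node i A (node i B C))
  | congr_left (i : Fin n) {A A' : W n k} (B : W n k) :
      Step A A' → Step (node i A B) (node i A' B)
  | congr_right (i : Fin n) (A : W n k) {B B' : W n k} :
      Step B B' → Step (node i A B) (node i A B')

/-- Equality of expressions (strict associativity of each operation). -/
def equiv (A B : W n k) : Prop := Relation.EqvGen Step A B

/-- Restriction of an expression to the leaves satisfying `p`
(`none` if no leaf survives). -/
def restrict : W n k → (Fin k → Bool) → Option (W n k)
  | leaf a, p => if p a then some (leaf a) else none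
  | node i A B, p =>
    match A.restrict p, B.restrict p with
    | some A', some B' => some (node i A' B')
    | some A', none => some A'
    | none, o => o

end W

/-- Joining two possibly-empty expressions by the operation `i`, with the convention
that the empty expression is a unit. -/
def onode {n k : ℕ} (i : Fin n) : Option (W n k) → Option (W n k) → Option (W n k)
  | some A, some B => some (W.node i A B)
  | some A, none => some A
  | none, o => o

/-- Equality of possibly-empty expressions. -/
def OEquiv {n k : ℕ} : Option (W n k) → Option (W n k) → Prop
  | none, none => True
  | some A, some B => A.equiv B
  | _, _ => False

/-- `A − T`: the expression `A` with the leaves belonging to `T` deleted. -/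
def diffR {n k : ℕ} (A : W n k) (T : Finset (Fin k)) : Option (W n k) :=
  A.restrict fun a => decide (a ∉ T)

namespace W

variable {n k : ℕ}

theorem leaves_ne_nil (A : W n k) : A.leaves ≠ [] := by
  induction A with
  | leaf a => simp [leaves]
  | node i A B ihA ihB => simp only [leaves, ne_eq, List.append_eq_nil_iff]; tauto

theorem inRel_mem {A : W n k} {a b : Fin k} {i : Fin n} (h : A.inRel a b i) :
    a ∈ A.leaves ∧ b ∈ A.leaves := by
  induction A with
  | leaf => exact h.elim
  | node j A B ihA ihB =>
    simp only [leaves, List.mem_append]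
    rcases h with h | h | ⟨_, ha, hb⟩
    · exact ⟨Or.inl (ihA h).1, Or.inl (ihA h).2⟩
    · exact ⟨Or.inr (ihB h).1, Or.inr (ihB h).2⟩
    · exact ⟨Or.inl ha, Or.inr hb⟩

theorem restrict_congr (A : W n k) {p q : Fin k → Bool}
    (h : ∀ a ∈ A.leaves, p a = q a) : A.restrict p = A.restrict q := by
  induction A with
  | leaf a => simp [restrict, h a (by simp [leaves])]
  | node i A B ihA ihB =>
    have h1 := ihA (fun a ha => h a (by simp [leaves, ha]))
    have h2 := ihB (fun a ha => h a (by simp [leaves, ha]))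
    simp only [restrict, h1, h2]

theorem restrict_all (A : W n k) {p : Fin k → Bool}
    (h : ∀ a ∈ A.leaves, p a = true) : A.restrict p = some A := by
  induction A with
  | leaf a => simp [restrict, h a (by simp [leaves])]
  | node i A B ihA ihB =>
    have h1 := ihA (fun a ha => h a (by simp [leaves, ha]))
    have h2 := ihB (fun a ha => h a (by simp [leaves, ha]))
    simp only [restrict, h1, h2]

theorem restrict_nonex (A : W n k) {p : Fin k → Bool}
    (h : ∀ a ∈ A.leaves, p a = false) : A.restrict p = none := by
  induction A with
  | leaf a => simp [restrict, h a (by simp [leaves])]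
  | node i A B ihA ihB =>
    have h1 := ihA (fun a ha => h a (by simp [leaves, ha]))
    have h2 := ihB (fun a ha => h a (by simp [leaves, ha]))
    simp only [restrict, h1, h2]

theorem equiv_refl (A : W n k) : A.equiv A := Relation.EqvGen.refl A

theorem equiv_node_left (i : Fin n) {A A' : W n k} (B : W n k)
    (h : A.equiv A') : (node i A B).equiv (node i A' B) := by
  induction h with
  | rel x y hxy => exact Relation.EqvGen.rel _ _ (Step.congr_left i B hxy)
  | refl x => exact Relation.EqvGen.refl _
  | symm x y _ ih => exact Relation.EqvGen.symm _ _ ih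
  | trans x y z _ _ ih1 ih2 => exact Relation.EqvGen.trans _ _ _ ih1 ih2

theorem equiv_node_right (i : Fin n) (A : W n k) {B B' : W n k}
    (h : B.equiv B') : (node i A B).equiv (node i A B') := by
  induction h with
  | rel x y hxy => exact Relation.EqvGen.rel _ _ (Step.congr_right i A hxy)
  | refl x => exact Relation.EqvGen.refl _
  | symm x y _ ih => exact Relation.EqvGen.symm _ _ ih
  | trans x y z _ _ ih1 ih2 => exact Relation.EqvGen.trans _ _ _ ih1 ih2

theorem decomposition_aux (X : W n k) : ∀ (S₁ S₂ : Finset (Fin k)) (i : Fin n),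
    X.leaves.Nodup → (∀ a ∈ X.leaves, a ∈ S₁ ∨ a ∈ S₂) →
    S₁.Nonempty → S₂.Nonempty → Disjoint S₁ S₂ →
    (∀ x ∈ S₁, x ∈ X.leaves) → (∀ y ∈ S₂, y ∈ X.leaves) →
    (∀ x ∈ S₁, ∀ y ∈ S₂, X.inRel x y i) →
    ∃ X₁ X₂ : W n k,
      X.restrict (fun a => decide (a ∈ S₁)) = some X₁ ∧
      X.restrict (fun a => decide (a ∈ S₂)) = some X₂ ∧
      X.equiv (W.node i X₁ X₂) := by
  induction X with
  | leaf c =>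
    intro S₁ S₂ i _ _ h₁ h₂ hd hs₁ hs₂ _
    obtain ⟨x, hx⟩ := h₁
    obtain ⟨y, hy⟩ := h₂
    have hx' : x = c := by simpa [leaves] using hs₁ x hx
    have hy' : y = c := by simpa [leaves] using hs₂ y hy
    exact absurd (hx' ▸ hx) (Finset.disjoint_right.mp hd (hy' ▸ hy))
  | node j A B ihA ihB =>
    intro S₁ S₂ i hnd hcov h₁ h₂ hd hs₁ hs₂ hsep
    rw [leaves, List.nodup_append'] at hnd
    obtain ⟨hndA, hndB, hdisj⟩ := hnd
    have hcov' : ∀ a, a ∈ A.leaves ∨ a ∈ B.leaves → a ∈ S₁ ∨ a ∈ S₂ := by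
      intro a ha; exact hcov a (by simp [leaves, ha])
    -- key fact: no x ∈ S₁ ∩ B with y ∈ S₂ ∩ A
    have hkey : ∀ x ∈ S₁, x ∈ B.leaves → ∀ y ∈ S₂, y ∈ A.leaves → False := by
      intro x hx hxB y hy hyA
      rcases hsep x hx y hy with h | h | ⟨_, hxA, _⟩
      · exact hdisj (inRel_mem h).1 hxB
      · exact hdisj hyA (inRel_mem h).2
      · exact hdisj hxA hxB
    by_cases hA₂ : ∀ y ∈ S₂, y ∉ A.leaves
    · -- S₂ ⊆ B.leaves
      have hS₂B : ∀ y ∈ S₂, y ∈ B.leaves := by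
        intro y hy
        rcases (by simpa [leaves] using hs₂ y hy : y ∈ A.leaves ∨ y ∈ B.leaves) with h | h
        · exact absurd h (hA₂ y hy)
        · exact h
      by_cases hB₁ : ∀ x ∈ S₁, x ∉ B.leaves
      · -- clean split: A.leaves = S₁, B.leaves = S₂
        have hS₁A : ∀ x ∈ S₁, x ∈ A.leaves := by
          intro x hx
          rcases (by simpa [leaves] using hs₁ x hx : x ∈ A.leaves ∨ x ∈ B.leaves) with h | h
          · exact h
          · exact absurd h (hB₁ x hx)
        have hAS₁ : ∀ a ∈ A.leaves, a ∈ S₁ := by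
          intro a ha
          rcases hcov' a (Or.inl ha) with h | h
          · exact h
          · exact absurd ha (hA₂ a h)
        have hBS₂ : ∀ a ∈ B.leaves, a ∈ S₂ := by
          intro a ha
          rcases hcov' a (Or.inr ha) with h | h
          · exact absurd ha (hB₁ a h)
          · exact h
        obtain ⟨x, hx⟩ := h₁
        obtain ⟨y, hy⟩ := h₂
        have hji : j = i := by
          rcases hsep x hx y hy with h | h | ⟨hji, _, _⟩
          · exact absurd (inRel_mem h).2 (hA₂ y hy)
          · exact absurd (inRel_mem h).1 (hB₁ x hx)
          · exact hji
        refine ⟨A, B, ?_, ?_, ?_⟩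
        · have r1 : A.restrict (fun a => decide (a ∈ S₁)) = some A :=
            restrict_all A (fun a ha => by simp [hAS₁ a ha])
          have r2 : B.restrict (fun a => decide (a ∈ S₁)) = none :=
            restrict_nonex B (fun a ha => by
              simp [Finset.disjoint_right.mp hd (hBS₂ a ha)])
          simp only [restrict, r1, r2]
        · have r1 : A.restrict (fun a => decide (a ∈ S₂)) = none :=
            restrict_nonex A (fun a ha => by
              simpa using fun h => hA₂ a h ha)
          have r2 : B.restrict (fun a => decide (a ∈ S₂)) = some B :=
            restrict_all B (fun a ha => by simp [hBS₂ a ha])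
          simp only [restrict, r1, r2]
        · rw [hji]; exact equiv_refl _
      · -- some of S₁ lies in B: recurse on B
        push_neg at hB₁
        obtain ⟨x₀, hx₀, hx₀B⟩ := hB₁
        have hAS₁ : ∀ a ∈ A.leaves, a ∈ S₁ := by
          intro a ha
          rcases hcov' a (Or.inl ha) with h | h
          · exact h
          · exact absurd ha (hA₂ a h)
        set B₁ : Finset (Fin k) := S₁.filter (fun a => a ∈ B.leaves) with hB₁def
        have hmemB₁ : ∀ a, a ∈ B₁ ↔ a ∈ S₁ ∧ a ∈ B.leaves := by
          intro a; simp [hB₁def]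
        have hsepB : ∀ x ∈ B₁, ∀ y ∈ S₂, B.inRel x y i := by
          intro x hx y hy
          obtain ⟨hxS₁, hxB⟩ := (hmemB₁ x).mp hx
          rcases hsep x hxS₁ y hy with h | h | ⟨_, hxA, _⟩
          · exact absurd hxB (hdisj (inRel_mem h).1)
          · exact h
          · exact absurd hxB (hdisj hxA)
        obtain ⟨B₁', B₂', rB₁, rB₂, hBe⟩ := ihB B₁ S₂ i hndB
          (fun a ha => by
            rcases hcov' a (Or.inr ha) with h | h
            · exact Or.inl ((hmemB₁ a).mpr ⟨h, ha⟩)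
            · exact Or.inr h)
          ⟨x₀, (hmemB₁ x₀).mpr ⟨hx₀, hx₀B⟩⟩ h₂
          (hd.mono_left (Finset.filter_subset _ _))
          (fun x hx => ((hmemB₁ x).mp hx).2) hS₂B hsepB
        -- j = i, using any leaf of A and any element of S₂
        obtain ⟨a₀, ha₀⟩ := List.exists_mem_of_ne_nil _ (leaves_ne_nil A)
        have ha₀S₁ : a₀ ∈ S₁ := hAS₁ a₀ ha₀
        obtain ⟨y₀, hy₀⟩ := h₂
        have hji : j = i := by
          rcases hsep a₀ ha₀S₁ y₀ hy₀ with h | h | ⟨hji, _, _⟩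
          · exact absurd (inRel_mem h).2 (hA₂ y₀ hy₀)
          · exact absurd ha₀ (hdisj · (inRel_mem h).1)
          · exact hji
        subst hji
        refine ⟨node j A B₁', B₂', ?_, ?_, ?_⟩
        · have r1 : A.restrict (fun a => decide (a ∈ S₁)) = some A :=
            restrict_all A (fun a ha => by simp [hAS₁ a ha])
          have r2 : B.restrict (fun a => decide (a ∈ S₁)) = some B₁' := by
            rw [restrict_congr B (q := fun a => decide (a ∈ B₁))
              (fun a ha => by simp [hmemB₁, ha])]
            exact rB₁
          simp only [restrict, r1, r2]
        · have r1 : A.restrict (fun a => decide (a ∈ S₂)) = none :=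
            restrict_nonex A (fun a ha => by simpa using fun h => hA₂ a h ha)
          simp only [restrict, r1, rB₂]
        · refine Relation.EqvGen.trans _ _ _ (equiv_node_right j A hBe) ?_
          exact Relation.EqvGen.symm _ _
            (Relation.EqvGen.rel _ _ (Step.assoc j A B₁' B₂'))
    · -- some of S₂ lies in A: recurse on A
      push_neg at hA₂
      obtain ⟨y₀, hy₀, hy₀A⟩ := hA₂
      have hB₁ : ∀ x ∈ S₁, x ∉ B.leaves := fun x hx hxB =>
        hkey x hx hxB y₀ hy₀ hy₀A
      have hS₁A : ∀ x ∈ S₁, x ∈ A.leaves := by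
        intro x hx
        rcases (by simpa [leaves] using hs₁ x hx : x ∈ A.leaves ∨ x ∈ B.leaves) with h | h
        · exact h
        · exact absurd h (hB₁ x hx)
      have hBS₂ : ∀ a ∈ B.leaves, a ∈ S₂ := by
        intro a ha
        rcases hcov' a (Or.inr ha) with h | h
        · exact absurd ha (hB₁ a h)
        · exact h
      set A₂ : Finset (Fin k) := S₂.filter (fun a => a ∈ A.leaves) with hA₂def
      have hmemA₂ : ∀ a, a ∈ A₂ ↔ a ∈ S₂ ∧ a ∈ A.leaves := by
        intro a; simp [hA₂def]
      have hsepA : ∀ x ∈ S₁, ∀ y ∈ A₂, A.inRel x y i := by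
        intro x hx y hy
        obtain ⟨hyS₂, hyA⟩ := (hmemA₂ y).mp hy
        rcases hsep x hx y hyS₂ with h | h | ⟨_, _, hyB⟩
        · exact h
        · exact absurd hyA (hdisj · (inRel_mem h).2)
        · exact absurd hyA (hdisj · hyB)
      obtain ⟨A₁', A₂'', rA₁, rA₂, hAe⟩ := ihA S₁ A₂ i hndA
        (fun a ha => by
          rcases hcov' a (Or.inl ha) with h | h
          · exact Or.inl h
          · exact Or.inr ((hmemA₂ a).mpr ⟨h, ha⟩))
        h₁ ⟨y₀, (hmemA₂ y₀).mpr ⟨hy₀, hy₀A⟩⟩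
        (hd.mono_right (Finset.filter_subset _ _))
        hS₁A (fun y hy => ((hmemA₂ y).mp hy).2) hsepA
      obtain ⟨b₀, hb₀⟩ := List.exists_mem_of_ne_nil _ (leaves_ne_nil B)
      have hb₀S₂ : b₀ ∈ S₂ := hBS₂ b₀ hb₀
      obtain ⟨x₀, hx₀⟩ := h₁
      have hji : j = i := by
        rcases hsep x₀ hx₀ b₀ hb₀S₂ with h | h | ⟨hji, _, _⟩
        · exact absurd hb₀ (hdisj (inRel_mem h).2)
        · exact absurd (inRel_mem h).1 (hB₁ x₀ hx₀)
        · exact hji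
      subst hji
      refine ⟨A₁', node j A₂'' B, ?_, ?_, ?_⟩
      · have r2 : B.restrict (fun a => decide (a ∈ S₁)) = none :=
          restrict_nonex B (fun a ha => by simpa using fun h => hB₁ a h ha)
        simp only [restrict, rA₁, r2]
      · have r1 : A.restrict (fun a => decide (a ∈ S₂)) = some A₂'' := by
          rw [restrict_congr A (q := fun a => decide (a ∈ A₂))
            (fun a ha => by simp [hmemA₂, ha])]
          exact rA₂
        have r2 : B.restrict (fun a => decide (a ∈ S₂)) = some B :=
          restrict_all B (fun a ha => by simp [hBS₂ a ha])
        simp only [restrict, r1, r2]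
      · refine Relation.EqvGen.trans _ _ _ (equiv_node_left j B hAe) ?_
        exact Relation.EqvGen.rel _ _ (Step.assoc j A₁' A₂'' B)

end W

/-- STATEMENT 13: if `S = S₁ ⊔ S₂` with both parts nonempty and `x □ᵢ y` in `X` for
every `x ∈ S₁`, `y ∈ S₂`, then `X` decomposes as `X = (X∩S₁) □ᵢ (X∩S₂)`. -/
theorem expression_decomposition (n k : ℕ) (hn : 1 ≤ n) (X : W n k)
    (S S₁ S₂ : Finset (Fin k)) (hX : X.Exact S)
    (h₁ : S₁.Nonempty) (h₂ : S₂.Nonempty) (hd : Disjoint S₁ S₂) (hu : S₁ ∪ S₂ = S)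
    (i : Fin n) (hsep : ∀ x ∈ S₁, ∀ y ∈ S₂, X.inRel x y i) :
    ∃ X₁ X₂ : W n k,
      X.restrict (fun a => decide (a ∈ S₁)) = some X₁ ∧
      X.restrict (fun a => decide (a ∈ S₂)) = some X₂ ∧
      X.equiv (W.node i X₁ X₂) := by
  obtain ⟨hnd, htf⟩ := hX
  have hmem : ∀ a, a ∈ X.leaves ↔ a ∈ S := by
    intro a; rw [← htf]; simp
  refine W.decomposition_aux X S₁ S₂ i hnd ?_ h₁ h₂ hd ?_ ?_ hsep
  · intro a ha
    have : a ∈ S₁ ∪ S₂ := hu ▸ (hmem a).mp ha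
    simpa using this
  · intro x hx
    exact (hmem x).mpr (hu ▸ (Finset.mem_union_left _ hx))
  · intro y hy
    exact (hmem y).mpr (hu ▸ (Finset.mem_union_right _ hy))
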